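/- Let F : ℝⁿ → Set ℝⁿ model a control system and suppose every admissible trajectory r has cost vector J(r) ∈ ℝ². Define the Pareto front 𝓕 as the set of cost vectors z attained by admissible trajectories such that no admissible trajectory has cost vector w with w ≤ z and w ≠ z. Define Σ := { z* + Θ(μ)·μ : μ ∈ [0,1]², μ₁+μ₂=1 }, where z* is the utopian point and Θ(μ) = inf{τ ≥ 0 : some admissible trajectory has cost ≤ z* + τμ componentwise}. Then 𝓕 ⊆ Σ, i.e., every Pareto optimal cost vector equals z* + Θ(μ)·μ for some μ in the unit simplex. -/

import Mathlib

open Set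

/-- The Pareto front `𝓕` of a set `S` of attainable cost vectors is contained
in the manifold `Σ = {z* + Θ(μ)·μ : μ in the unit simplex}`. -/
theorem pareto_front_subset_sigma (S : Set (Fin 2 → ℝ)) (hS : S.Nonempty)
    (hbdd : ∀ i : Fin 2, BddBelow ((fun w => w i) '' S))
    (zstar : Fin 2 → ℝ)
    (hz : ∀ i : Fin 2, zstar i = sInf ((fun w => w i) '' S)) :
    {z | z ∈ S ∧ ¬ ∃ w ∈ S, w ≤ z ∧ w ≠ z} ⊆
      {z | ∃ μ : Fin 2 → ℝ, (∀ i, 0 ≤ μ i ∧ μ i ≤ 1) ∧ μ 0 + μ 1 = 1 ∧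
        z = zstar +
          (sInf {τ : ℝ | 0 ≤ τ ∧ ∃ w ∈ S, w ≤ zstar + τ • μ}) • μ} := by
  rintro z ⟨hzS, hpar⟩
  -- z ≥ zstar componentwise
  have hge : ∀ i, zstar i ≤ z i := by
    intro i
    rw [hz i]
    exact csInf_le (hbdd i) ⟨z, hzS, rfl⟩
  set d : Fin 2 → ℝ := fun i => z i - zstar i with hd
  have hdnn : ∀ i, 0 ≤ d i := fun i => sub_nonneg.mpr (hge i)
  set τ : ℝ := d 0 + d 1 with hτdef
  have hτnn : 0 ≤ τ := add_nonneg (hdnn 0) (hdnn 1)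
  rcases eq_or_lt_of_le hτnn with hτ0 | hτpos
  · -- τ = 0 : z = zstar, take μ = (1,0)
    have hd0 : d 0 = 0 ∧ d 1 = 0 := by
      constructor <;> nlinarith [hdnn 0, hdnn 1]
    have hzz : z = zstar := by
      have h01 : ∀ i, z i = zstar i := by
        rw [Fin.forall_fin_two]
        have h0 := hd0.1
        have h1 := hd0.2
        simp only [hd] at h0 h1
        constructor <;> linarith
      funext i; exact h01 i
    refine ⟨fun i => if i = 0 then 1 else 0, ?_, by norm_num, ?_⟩
    · intro i; by_cases h : i = 0 <;> simp [h]
    · set μ : Fin 2 → ℝ := fun i => if i = 0 then 1 else 0 with hμ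
      have h0mem : (0 : ℝ) ∈ {τ : ℝ | 0 ≤ τ ∧ ∃ w ∈ S, w ≤ zstar + τ • μ} := by
        refine ⟨le_refl 0, z, hzS, ?_⟩
        intro i
        simp [hzz]
      have hinf : sInf {τ : ℝ | 0 ≤ τ ∧ ∃ w ∈ S, w ≤ zstar + τ • μ} = 0 := by
        apply le_antisymm
        · exact csInf_le ⟨0, fun t ht => ht.1⟩ h0mem
        · exact le_csInf ⟨0, h0mem⟩ fun t ht => ht.1
      rw [hinf, hzz]
      funext i; simp
  · -- τ > 0
    set μ : Fin 2 → ℝ := fun i => d i / τ with hμ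
    have hμnn : ∀ i, 0 ≤ μ i := fun i => div_nonneg (hdnn i) hτnn
    have hsum : μ 0 + μ 1 = 1 := by
      simp only [hμ]
      field_simp
      exact hτdef.symm
    have hμle : ∀ i, μ i ≤ 1 := by
      rw [Fin.forall_fin_two]
      constructor <;>
        · rw [hμ, div_le_one hτpos]
          simp only [hτdef]
          nlinarith [hdnn 0, hdnn 1]
    have hzτ : ∀ i, z i = zstar i + τ * μ i := by
      intro i
      rw [hμ]
      field_simp [hd]
      simp only [hd]
      ring
    have hτmem : τ ∈ {t : ℝ | 0 ≤ t ∧ ∃ w ∈ S, w ≤ zstar + t • μ} := by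
      refine ⟨hτnn, z, hzS, ?_⟩
      intro i
      simp [hzτ i]
    have hlb : ∀ t ∈ {t : ℝ | 0 ≤ t ∧ ∃ w ∈ S, w ≤ zstar + t • μ}, τ ≤ t := by
      rintro t ⟨htnn, w, hwS, hwle⟩
      by_contra hlt
      push_neg at hlt
      -- some component of μ is positive
      obtain ⟨j, hj⟩ : ∃ j, 0 < μ j := by
        by_contra h
        push_neg at h
        have h0 := le_antisymm (h 0) (hμnn 0)
        have h1 := le_antisymm (h 1) (hμnn 1)
        rw [h0, h1] at hsum
        norm_num at hsum
      apply hpar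
      refine ⟨w, hwS, ?_, ?_⟩
      · intro i
        have := hwle i
        simp only [Pi.add_apply, Pi.smul_apply, smul_eq_mul] at this
        have hμi := hμnn i
        rw [hzτ i]
        nlinarith
      · intro hwz
        have := hwle j
        simp only [Pi.add_apply, Pi.smul_apply, smul_eq_mul] at this
        rw [hwz, hzτ j] at this
        nlinarith
    have hinf : sInf {t : ℝ | 0 ≤ t ∧ ∃ w ∈ S, w ≤ zstar + t • μ} = τ := by
      apply le_antisymm
      · exact csInf_le ⟨0, fun t ht => ht.1⟩ hτmem
      · exact le_csInf ⟨τ, hτmem⟩ hlb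
    refine ⟨μ, fun i => ⟨hμnn i, hμle i⟩, hsum, ?_⟩
    rw [hinf]
    funext i
    simp [hzτ i]
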